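/- For the coupled joint process X' of two walkers on a connected graph G, the meeting time satisfies M_{X'}(x,y) ≤ φ(x,y) < 2·H_{P^B}(G) for all starting vertices x, y, where φ(x,y) = H_{P^B}(x,y) + H_{P^B}(y,t) − H_{P^B}(t,y) for a hidden vertex t of the biased random walk. -/

import Mathlib

open Finset

/-- Transition matrix of the biased random walk `X_B` on a graph `G` on `N` vertices:
`P^B_{ij} = (1/N)(1/|N_i| + 1/|N_j|)` for edges, `P^B_{ii} = 1 - Σ_{k ∈ N_i} P^B_{ik}`,
and `0` otherwise. -/
noncomputable def PB (N : ℕ) (G : SimpleGraph (Fin N)) [DecidableRel G.Adj] (i j : Fin N) : ℝ :=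
  if G.Adj i j then (1 / (N : ℝ)) * (1 / (G.degree i : ℝ) + 1 / (G.degree j : ℝ))
  else if i = j then
    1 - ∑ k ∈ G.neighborFinset i,
      (1 / (N : ℝ)) * (1 / (G.degree i : ℝ) + 1 / (G.degree k : ℝ))
  else 0

/-- `H` is the vector of expected hitting times of the Markov chain with transition
matrix `P^B` on the vertices of `G`: `H i j` is the expected number of steps a walk
started at `i` takes to first reach `j`, characterized by the first-step equations. -/
def IsHittingTime (N : ℕ) (G : SimpleGraph (Fin N)) [DecidableRel G.Adj]
    (H : Fin N → Fin N → ℝ) : Prop :=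
  (∀ y, H y y = 0) ∧
  ∀ x y, x ≠ y → H x y = 1 + ∑ k : Fin N, PB N G x k * H k y

/-- Total probability that the biased walk at `x` moves (to some neighbor). -/
noncomputable def PBsum (N : ℕ) (G : SimpleGraph (Fin N)) [DecidableRel G.Adj]
    (x : Fin N) : ℝ :=
  ∑ i ∈ G.neighborFinset x, PB N G x i

/-- `M` is the vector of expected meeting times of the joint process `X` of two opposite
strong opinions at `x` and `y`: if `x ∉ N_y`, exactly one walker moves at a time (each
single move having probability `P^B`), and both stay with probability
`1 - Σ_{i∈N_x}P^B_{xi} - Σ_{j∈N_y}P^B_{yj}`; if `x ∈ N_y`, additionally the walkers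
swap positions through the common edge (which counts as meeting) with probability
`P^B_{xy}`, and both stay with probability
`1 - Σ_{i∈N_x}P^B_{xi} - Σ_{j∈N_y}P^B_{yj} + P^B_{xy}`. -/
def IsMeetingTimeX (N : ℕ) (G : SimpleGraph (Fin N)) [DecidableRel G.Adj]
    (M : Fin N → Fin N → ℝ) : Prop :=
  (∀ x, M x x = 0) ∧
  (∀ x y, x ≠ y → ¬ G.Adj x y →
    M x y = 1 + (∑ i ∈ G.neighborFinset x, PB N G x i * M i y)
      + (∑ j ∈ G.neighborFinset y, PB N G y j * M x j)
      + (1 - PBsum N G x - PBsum N G y) * M x y) ∧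
  (∀ x y, G.Adj x y →
    M x y = 1 + (∑ i ∈ (G.neighborFinset x).erase y, PB N G x i * M i y)
      + (∑ j ∈ (G.neighborFinset y).erase x, PB N G y j * M x j)
      + (1 - PBsum N G x - PBsum N G y + PB N G x y) * M x y)

/-- `M` is the vector of expected meeting times of the coupled process `X'` of two
walkers at `x` and `y`: exactly one walker moves at a time (each single move having
probability `P^B`); if `x ∈ N_y` the walkers meet (at `x` or at `y`) with probability
`2·P^B_{xy}`; both walkers stay with probability
`1 - Σ_{i∈N_x}P^B_{xi} - Σ_{j∈N_y}P^B_{yj}`. -/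
def IsMeetingTimeX' (N : ℕ) (G : SimpleGraph (Fin N)) [DecidableRel G.Adj]
    (M : Fin N → Fin N → ℝ) : Prop :=
  (∀ x, M x x = 0) ∧
  (∀ x y, x ≠ y → ¬ G.Adj x y →
    M x y = 1 + (∑ i ∈ G.neighborFinset x, PB N G x i * M i y)
      + (∑ j ∈ G.neighborFinset y, PB N G y j * M x j)
      + (1 - PBsum N G x - PBsum N G y) * M x y) ∧
  (∀ x y, G.Adj x y →
    M x y = 1 + (∑ i ∈ (G.neighborFinset x).erase y, PB N G x i * M i y)
      + (∑ j ∈ (G.neighborFinset y).erase x, PB N G y j * M x j)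
      + (1 - PBsum N G x - PBsum N G y) * M x y)


section Aux

variable (N : ℕ) (G : SimpleGraph (Fin N)) [DecidableRel G.Adj]

lemma PB_symm (i j : Fin N) : PB N G i j = PB N G j i := by
  unfold PB
  by_cases h : G.Adj i j
  · rw [if_pos h, if_pos h.symm]; ring
  · by_cases h2 : i = j
    · subst h2; rfl
    · rw [if_neg h, if_neg h2, if_neg (show ¬ G.Adj j i from fun hh => h hh.symm),
        if_neg (Ne.symm h2)]

lemma PB_zero {i j : Fin N} (h : ¬ G.Adj i j) (h2 : i ≠ j) : PB N G i j = 0 := by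
  unfold PB; rw [if_neg h, if_neg h2]

lemma PBsum_eq (x : Fin N) : PBsum N G x
    = ∑ k ∈ G.neighborFinset x, (1 / (N : ℝ)) * (1 / (G.degree x : ℝ) + 1 / (G.degree k : ℝ)) := by
  unfold PBsum
  refine Finset.sum_congr rfl fun k hk => ?_
  unfold PB
  rw [if_pos ((G.mem_neighborFinset x k).mp hk)]

lemma PB_diag (x : Fin N) : PB N G x x = 1 - PBsum N G x := by
  unfold PB
  rw [if_neg (G.irrefl), if_pos rfl, PBsum_eq]

lemma deg_pos (hN : 2 ≤ N) (hG : G.Connected) (v : Fin N) : 0 < G.degree v := by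
  have : Nontrivial (Fin N) := Fin.nontrivial_iff_two_le.mpr hN
  obtain ⟨w, hw⟩ := exists_ne v
  rw [G.degree_pos_iff_exists_adj]
  obtain ⟨p⟩ := hG.preconnected v w
  cases p with
  | nil => exact absurd rfl hw
  | cons h _ => exact ⟨_, h⟩

lemma PB_nonneg (hdeg : ∀ v, 0 < G.degree v) (i j : Fin N) : 0 ≤ PB N G i j := by
  unfold PB
  by_cases h : G.Adj i j
  · rw [if_pos h]; positivity
  · by_cases h2 : i = j
    · subst h2
      rw [if_neg h, if_pos rfl]
      have hN0 : 0 < N := i.pos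
      have hNpos : (0:ℝ) < N := by exact_mod_cast hN0
      have hdi : (0:ℝ) < G.degree i := by exact_mod_cast hdeg i
      have hcard : (G.degree i : ℝ) + 1 ≤ N := by
        have := G.degree_lt_card_verts i
        rw [Fintype.card_fin] at this
        exact_mod_cast Nat.succ_le_of_lt this
      have hterm : ∀ k ∈ G.neighborFinset i,
          (1/(N:ℝ)) * (1/(G.degree i : ℝ) + 1/(G.degree k : ℝ))
            ≤ (1/(N:ℝ)) * (1/(G.degree i : ℝ) + 1) := by
        intro k _
        have hk : (1:ℝ) ≤ G.degree k := by exact_mod_cast hdeg k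
        have h1 : 1/(G.degree k:ℝ) ≤ 1 := by
          rw [div_le_one (by linarith)]; linarith
        have hNn : (0:ℝ) ≤ 1/(N:ℝ) := by positivity
        apply mul_le_mul_of_nonneg_left _ hNn
        linarith
      have hsum := Finset.sum_le_card_nsmul _ _ _ hterm
      rw [G.card_neighborFinset_eq_degree, nsmul_eq_mul] at hsum
      have key : (G.degree i : ℝ) * ((1/(N:ℝ)) * (1/(G.degree i:ℝ) + 1))
          = (1 + G.degree i)/N := by
        field_simp
      rw [key] at hsum
      have : (1 + (G.degree i:ℝ))/N ≤ 1 := by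
        rw [div_le_one hNpos]; linarith
      linarith
    · rw [if_neg h, if_neg h2]

lemma PBsum_nonneg (hdeg : ∀ v, 0 < G.degree v) (x : Fin N) : 0 ≤ PBsum N G x :=
  Finset.sum_nonneg fun k _ => PB_nonneg N G hdeg x k

lemma sum_split (x : Fin N) (f : Fin N → ℝ) :
    ∑ k, PB N G x k * f k =
      (∑ i ∈ G.neighborFinset x, PB N G x i * f i) + (1 - PBsum N G x) * f x := by
  have hx : x ∉ G.neighborFinset x := by simp
  rw [← Finset.sum_subset (Finset.subset_univ (insert x (G.neighborFinset x)))
      (fun k _ hk => ?_)]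
  · rw [Finset.sum_insert hx, PB_diag, add_comm]
  · simp only [Finset.mem_insert, not_or] at hk
    rw [PB_zero N G (fun hadj => hk.2 ((G.mem_neighborFinset x k).mpr hadj))
        (fun he => hk.1 he.symm), zero_mul]

lemma row_sum (x : Fin N) : ∑ k, PB N G x k = 1 := by
  have h := sum_split N G x (fun _ => (1:ℝ))
  simp only [mul_one] at h
  have hs : PBsum N G x = ∑ i ∈ G.neighborFinset x, PB N G x i := rfl
  rw [h, ← hs]; ring

lemma col_sum (x : Fin N) : ∑ k, PB N G k x = 1 := by
  rw [show (∑ k, PB N G k x) = ∑ k, PB N G x k from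
    Finset.sum_congr rfl fun k _ => PB_symm N G k x]
  exact row_sum N G x

end Aux


section HAux

variable (N : ℕ) (G : SimpleGraph (Fin N)) [DecidableRel G.Adj]
variable (H : Fin N → Fin N → ℝ)

lemma full_eq (hH : IsHittingTime N G H) {x y : Fin N} (hxy : x ≠ y) :
    ∑ k, PB N G x k * H k y = H x y - 1 := by
  have := hH.2 x y hxy; linarith

lemma H_nonneg (hdeg : ∀ v, 0 < G.degree v) (hH : IsHittingTime N G H)
    (x y : Fin N) : 0 ≤ H x y := by
  obtain ⟨k0, -, hk0⟩ := Finset.exists_min_image (univ : Finset (Fin N))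
    (fun k => H k y) ⟨y, mem_univ y⟩
  by_cases h : k0 = y
  · have hx := hk0 x (mem_univ x)
    rw [h, hH.1 y] at hx
    exact hx
  · exfalso
    have heq := hH.2 k0 y h
    have hge : ∑ k, PB N G k0 k * H k0 y ≤ ∑ k, PB N G k0 k * H k y := by
      apply Finset.sum_le_sum
      intro k _
      exact mul_le_mul_of_nonneg_left (hk0 k (mem_univ k)) (PB_nonneg N G hdeg _ _)
    rw [← Finset.sum_mul, row_sum, one_mul] at hge
    linarith

lemma H_one_le (hdeg : ∀ v, 0 < G.degree v) (hH : IsHittingTime N G H)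
    {x y : Fin N} (hxy : x ≠ y) : 1 ≤ H x y := by
  rw [hH.2 x y hxy]
  have h0 : 0 ≤ ∑ k, PB N G x k * H k y :=
    Finset.sum_nonneg fun k _ =>
      mul_nonneg (PB_nonneg N G hdeg _ _) (H_nonneg N G H hdeg hH _ _)
  linarith

lemma return_sum (hdeg : ∀ v, 0 < G.degree v) (hH : IsHittingTime N G H)
    (hN : 1 ≤ N) (y : Fin N) : ∑ k, PB N G y k * H k y = (N:ℝ) - 1 := by
  have key : ∑ x, (H x y - ∑ k, PB N G x k * H k y) = 0 := by
    rw [Finset.sum_sub_distrib]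
    have hcol : ∑ x, ∑ k, PB N G x k * H k y = ∑ k, H k y := by
      rw [Finset.sum_comm]
      refine Finset.sum_congr rfl fun k _ => ?_
      rw [← Finset.sum_mul, col_sum, one_mul]
    rw [hcol]
    exact sub_self _
  have split : ∑ x, (H x y - ∑ k, PB N G x k * H k y)
      = (∑ x ∈ univ.erase y, (H x y - ∑ k, PB N G x k * H k y))
        + (H y y - ∑ k, PB N G y k * H k y) :=
    (Finset.sum_erase_add _ _ (mem_univ y)).symm
  have herase : ∑ x ∈ univ.erase y, (H x y - ∑ k, PB N G x k * H k y) = (N:ℝ) - 1 := by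
    have hone : ∀ x ∈ univ.erase y, H x y - ∑ k, PB N G x k * H k y = 1 := by
      intro x hx
      rw [full_eq N G H hH (Finset.mem_erase.mp hx).1]; ring
    rw [Finset.sum_congr rfl hone, Finset.sum_const,
      Finset.card_erase_of_mem (mem_univ y), Finset.card_univ, Fintype.card_fin,
      nsmul_eq_mul, mul_one, Nat.cast_sub hN, Nat.cast_one]
  rw [split, herase, hH.1 y] at key
  linarith

lemma cycle (hdeg : ∀ v, 0 < G.degree v) (hH : IsHittingTime N G H)
    (hN : 1 ≤ N) (x y t : Fin N) (hxt : x ≠ t) (hyt : y ≠ t) :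
    H y x + H t y + H x t = H x y + H y t + H t x := by
  by_cases hxy : x = y
  · subst hxy; ring
  set u : Fin N → ℝ := fun k => H k y - H k t with hu
  set v : Fin N → ℝ := fun k => H k t - H k x with hv
  have hNR : (0:ℝ) < N := by
    have : 0 < N := Nat.lt_of_lt_of_le Nat.zero_lt_one hN
    exact_mod_cast this
  have hsplitu : ∀ k, ∑ m, PB N G k m * u m
      = (∑ m, PB N G k m * H m y) - (∑ m, PB N G k m * H m t) := by
    intro k
    rw [← Finset.sum_sub_distrib]
    exact Finset.sum_congr rfl fun m _ => by simp only [hu]; ring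
  have hsplitv : ∀ k, ∑ m, PB N G k m * v m
      = (∑ m, PB N G k m * H m t) - (∑ m, PB N G k m * H m x) := by
    intro k
    rw [← Finset.sum_sub_distrib]
    exact Finset.sum_congr rfl fun m _ => by simp only [hv]; ring
  have hA : ∀ k, u k - ∑ m, PB N G k m * u m
      = (N:ℝ) * ((if k = t then 1 else 0) - (if k = y then 1 else 0)) := by
    intro k
    by_cases hky : k = y
    · rw [hsplitu, hky, return_sum N G H hdeg hH hN, full_eq N G H hH hyt]
      rw [if_neg hyt, if_pos (Eq.refl y)]
      simp only [hu, hH.1 y]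
      ring
    · by_cases hkt : k = t
      · rw [hsplitu, hkt, full_eq N G H hH (Ne.symm hyt), return_sum N G H hdeg hH hN]
        rw [if_pos (Eq.refl t), if_neg (Ne.symm hyt)]
        simp only [hu, hH.1 t]
        ring
      · rw [hsplitu, full_eq N G H hH hky, full_eq N G H hH hkt]
        rw [if_neg hkt, if_neg hky]
        simp only [hu]
        ring
  have hB : ∀ k, v k - ∑ m, PB N G k m * v m
      = (N:ℝ) * ((if k = x then 1 else 0) - (if k = t then 1 else 0)) := by
    intro k
    by_cases hkt : k = t
    · rw [hsplitv, hkt, return_sum N G H hdeg hH hN, full_eq N G H hH (Ne.symm hxt)]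
      rw [if_neg (show ¬ t = x from fun h => hxt h.symm), if_pos (Eq.refl t)]
      simp only [hv, hH.1 t]
      ring
    · by_cases hkx : k = x
      · rw [hsplitv, hkx, full_eq N G H hH hxt, return_sum N G H hdeg hH hN]
        rw [if_pos (Eq.refl x), if_neg hxt]
        simp only [hv, hH.1 x]
        ring
      · rw [hsplitv, full_eq N G H hH hkt, full_eq N G H hH hkx]
        rw [if_neg hkx, if_neg hkt]
        simp only [hv]
        ring
  have hC : ∑ k, (u k - ∑ m, PB N G k m * u m) * v k
      = ∑ k, u k * (v k - ∑ m, PB N G k m * v m) := by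
    have hswap : ∑ k, ∑ m, (PB N G k m * u m) * v k
        = ∑ k, ∑ m, u k * (PB N G k m * v m) := by
      rw [Finset.sum_comm]
      refine Finset.sum_congr rfl fun a _ => Finset.sum_congr rfl fun b _ => ?_
      rw [PB_symm N G b a]; ring
    calc ∑ k, (u k - ∑ m, PB N G k m * u m) * v k
        = ∑ k, (u k * v k - ∑ m, (PB N G k m * u m) * v k) := by
          refine Finset.sum_congr rfl fun k _ => ?_
          rw [sub_mul, Finset.sum_mul]
      _ = (∑ k, u k * v k) - ∑ k, ∑ m, (PB N G k m * u m) * v k :=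
          Finset.sum_sub_distrib _ _
      _ = (∑ k, u k * v k) - ∑ k, ∑ m, u k * (PB N G k m * v m) := by rw [hswap]
      _ = ∑ k, (u k * v k - ∑ m, u k * (PB N G k m * v m)) :=
          (Finset.sum_sub_distrib _ _).symm
      _ = ∑ k, u k * (v k - ∑ m, PB N G k m * v m) := by
          refine (Finset.sum_congr rfl fun k _ => ?_).symm
          rw [mul_sub, Finset.mul_sum]
  have hL : ∑ k, (u k - ∑ m, PB N G k m * u m) * v k
      = (N:ℝ) * v t - (N:ℝ) * v y := by
    rw [Finset.sum_congr rfl fun k _ => by rw [hA k]]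
    have : ∀ k : Fin N, ((N:ℝ) * ((if k = t then (1:ℝ) else 0) - (if k = y then 1 else 0))) * v k
        = (if k = t then (N:ℝ) * v k else 0) - (if k = y then (N:ℝ) * v k else 0) := by
      intro k
      by_cases h1 : k = t
      · have h2 : ¬ k = y := fun h => hyt ((h1.symm.trans h).symm)
        rw [if_pos h1, if_neg h2, if_pos h1, if_neg h2]; ring
      · by_cases h2 : k = y
        · rw [if_neg h1, if_pos h2, if_neg h1, if_pos h2]; ring
        · rw [if_neg h1, if_neg h2, if_neg h1, if_neg h2]; ring
    rw [Finset.sum_congr rfl fun k _ => this k, Finset.sum_sub_distrib,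
      Finset.sum_ite_eq' univ t, Finset.sum_ite_eq' univ y]
    simp
  have hR : ∑ k, u k * (v k - ∑ m, PB N G k m * v m)
      = (N:ℝ) * u x - (N:ℝ) * u t := by
    rw [Finset.sum_congr rfl fun k _ => by rw [hB k]]
    have : ∀ k : Fin N, u k * ((N:ℝ) * ((if k = x then (1:ℝ) else 0) - (if k = t then 1 else 0)))
        = (if k = x then (N:ℝ) * u k else 0) - (if k = t then (N:ℝ) * u k else 0) := by
      intro k
      by_cases h1 : k = x
      · have h2 : ¬ k = t := fun h => hxt (h1.symm.trans h)
        rw [if_pos h1, if_neg h2, if_pos h1, if_neg h2]; ring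
      · by_cases h2 : k = t
        · rw [if_neg h1, if_pos h2, if_neg h1, if_pos h2]; ring
        · rw [if_neg h1, if_neg h2, if_neg h1, if_neg h2]; ring
    rw [Finset.sum_congr rfl fun k _ => this k, Finset.sum_sub_distrib,
      Finset.sum_ite_eq' univ x, Finset.sum_ite_eq' univ t]
    simp
  have hfin := hC
  rw [hL, hR] at hfin
  simp only [hu, hv, hH.1] at hfin
  have key : (N:ℝ) * ((H y x + H t y + H x t) - (H x y + H y t + H t x)) = 0 := by
    ring_nf at hfin ⊢
    linarith
  have := mul_eq_zero.mp key
  rcases this with h | h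
  · exact absurd h (ne_of_gt hNR)
  · linarith

lemma phi_repr (hdeg : ∀ v, 0 < G.degree v) (hH : IsHittingTime N G H)
    (hN : 1 ≤ N) (t a b : Fin N) :
    H a b + H b t - H t b = H b a + H a t - H t a := by
  by_cases hat : a = t
  · subst hat; rw [hH.1]; ring
  · by_cases hbt : b = t
    · subst hbt; rw [hH.1]; ring
    · have := cycle N G H hdeg hH hN a b t hat hbt
      linarith

lemma key1 (hdeg : ∀ v, 0 < G.degree v) (hH : IsHittingTime N G H)
    {x y : Fin N} (hxy : x ≠ y) (c : ℝ) :
    ∑ i ∈ G.neighborFinset x, PB N G x i * (H i y + c)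
      = PBsum N G x * (H x y + c) - 1 := by
  have hs := sum_split N G x (fun i => H i y + c)
  have hfull : ∑ k, PB N G x k * (H k y + c) = (H x y - 1) + c := by
    rw [Finset.sum_congr rfl fun k _ =>
        (show PB N G x k * (H k y + c) = PB N G x k * H k y + PB N G x k * c by ring),
      Finset.sum_add_distrib, full_eq N G H hH hxy, ← Finset.sum_mul, row_sum N G x,
      one_mul]
  rw [hfull] at hs
  linear_combination -hs

lemma key2 (hdeg : ∀ v, 0 < G.degree v) (hH : IsHittingTime N G H)
    (hN : 1 ≤ N) {x y : Fin N} (hxy : x ≠ y) (t : Fin N) :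
    ∑ j ∈ G.neighborFinset y, PB N G y j * (H x j + H j t - H t j)
      = PBsum N G y * (H x y + H y t - H t y) - 1 := by
  have hrw : ∀ j : Fin N, H x j + H j t - H t j = H j x + (H x t - H t x) := by
    intro j
    have := phi_repr N G H hdeg hH hN t x j
    linarith
  rw [Finset.sum_congr rfl fun j _ => by rw [hrw j]]
  rw [key1 N G H hdeg hH (Ne.symm hxy) (H x t - H t x)]
  have hpr := phi_repr N G H hdeg hH hN t x y
  linear_combination (-(PBsum N G y)) * hpr

end HAux

/-- For the coupled joint process `X'` of two walkers on a connected
graph `G`, the meeting time satisfies `M_{X'}(x,y) ≤ φ(x,y) < 2·H_{P^B}(G)` for all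
starting vertices `x, y`, where `φ(x,y) = H(x,y) + H(y,t) − H(t,y)` for a hidden
vertex `t` of the biased random walk (`t` is hidden if `H(t,v) ≤ H(v,t)` for all `v`). -/
theorem coupled_meeting_time_le_potential (N : ℕ) (hN : 2 ≤ N)
    (G : SimpleGraph (Fin N)) [DecidableRel G.Adj] (hG : G.Connected)
    (H : Fin N → Fin N → ℝ) (hH : IsHittingTime N G H) (HG : ℝ)
    (hHG : IsGreatest {h : ℝ | ∃ a b : Fin N, h = H a b} HG)
    (t : Fin N) (ht : ∀ v : Fin N, H t v ≤ H v t)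
    (M : Fin N → Fin N → ℝ) (hM : IsMeetingTimeX' N G M) :
    ∀ x y : Fin N, M x y ≤ H x y + H y t - H t y ∧
      H x y + H y t - H t y < 2 * HG := by
  intro x y
  have hN1 : 1 ≤ N := by omega
  have hdeg : ∀ v, 0 < G.degree v := deg_pos N G hN hG
  have hPB : ∀ i j, 0 ≤ PB N G i j := PB_nonneg N G hdeg
  have hub : ∀ a b : Fin N, H a b ≤ HG := fun a b => hHG.2 ⟨a, b, rfl⟩
  have hHG1 : (1:ℝ) ≤ HG := by
    have hne : (⟨0, by omega⟩ : Fin N) ≠ (⟨1, by omega⟩ : Fin N) := by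
      intro h
      have := congrArg Fin.val h
      simp at this
    exact le_trans (H_one_le N G H hdeg hH hne) (hub _ _)
  obtain ⟨p0, -, hp0⟩ := Finset.exists_min_image (univ : Finset (Fin N × Fin N))
    (fun p => H p.1 p.2 + H p.2 t - H t p.2 - M p.1 p.2) ⟨(x, y), mem_univ _⟩
  obtain ⟨x0, y0⟩ := p0
  have hmin : ∀ a b : Fin N, H x0 y0 + H y0 t - H t y0 - M x0 y0
      ≤ H a b + H b t - H t b - M a b := by
    intro a b
    simpa using hp0 (a, b) (mem_univ _)
  have h0 : 0 ≤ H x0 y0 + H y0 t - H t y0 - M x0 y0 := by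
    by_cases hxy : x0 = y0
    · rw [hxy, hH.1 y0, hM.1 y0]
      linarith [ht y0]
    · by_cases hadj : G.Adj x0 y0
      · -- adjacent minimizer
        by_contra hneg
        push_neg at hneg
        have hMeq := hM.2.2 x0 y0 hadj
        have hy0mem : y0 ∈ G.neighborFinset x0 := (G.mem_neighborFinset _ _).mpr hadj
        have hx0mem : x0 ∈ G.neighborFinset y0 := (G.mem_neighborFinset _ _).mpr hadj.symm
        have hs1 : ∑ i ∈ G.neighborFinset x0, PB N G x0 i = PBsum N G x0 := rfl
        have hs2 : ∑ j ∈ G.neighborFinset y0, PB N G y0 j = PBsum N G y0 := rfl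
        have hEA := Finset.sum_erase_add (G.neighborFinset x0)
          (fun i => PB N G x0 i * (H i y0 + (H y0 t - H t y0))) hy0mem
        rw [key1 N G H hdeg hH hxy (H y0 t - H t y0)] at hEA
        have hEB := Finset.sum_erase_add (G.neighborFinset y0)
          (fun j => PB N G y0 j * (H x0 j + H j t - H t j)) hx0mem
        rw [key2 N G H hdeg hH hN1 hxy t] at hEB
        beta_reduce at hEA hEB
        have hCA : ∑ i ∈ (G.neighborFinset x0).erase y0, PB N G x0 i
            = PBsum N G x0 - PB N G x0 y0 := by
          have := Finset.sum_erase_add (G.neighborFinset x0) (fun i => PB N G x0 i) hy0mem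
          rw [hs1] at this
          linarith
        have hCB : ∑ j ∈ (G.neighborFinset y0).erase x0, PB N G y0 j
            = PBsum N G y0 - PB N G y0 x0 := by
          have := Finset.sum_erase_add (G.neighborFinset y0) (fun j => PB N G y0 j) hx0mem
          rw [hs2] at this
          linarith
        have hSA : ∑ i ∈ (G.neighborFinset x0).erase y0, PB N G x0 i * M i y0
            ≤ (∑ i ∈ (G.neighborFinset x0).erase y0,
                PB N G x0 i * (H i y0 + (H y0 t - H t y0)))
              - (∑ i ∈ (G.neighborFinset x0).erase y0, PB N G x0 i)
                  * (H x0 y0 + H y0 t - H t y0 - M x0 y0) := by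
          rw [Finset.sum_mul, ← Finset.sum_sub_distrib]
          apply Finset.sum_le_sum
          intro i _
          have hm := hmin i y0
          have := mul_le_mul_of_nonneg_left
            (show M i y0 ≤ H i y0 + (H y0 t - H t y0)
              - (H x0 y0 + H y0 t - H t y0 - M x0 y0) by linarith)
            (hPB x0 i)
          linarith
        have hSB : ∑ j ∈ (G.neighborFinset y0).erase x0, PB N G y0 j * M x0 j
            ≤ (∑ j ∈ (G.neighborFinset y0).erase x0,
                PB N G y0 j * (H x0 j + H j t - H t j))
              - (∑ j ∈ (G.neighborFinset y0).erase x0, PB N G y0 j)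
                  * (H x0 y0 + H y0 t - H t y0 - M x0 y0) := by
          rw [Finset.sum_mul, ← Finset.sum_sub_distrib]
          apply Finset.sum_le_sum
          intro j _
          have hm := hmin x0 j
          have := mul_le_mul_of_nonneg_left
            (show M x0 j ≤ H x0 j + H j t - H t j
              - (H x0 y0 + H y0 t - H t y0 - M x0 y0) by linarith)
            (hPB y0 j)
          linarith
        rw [hCA] at hSA
        rw [hCB] at hSB
        have hP1 : PB N G x0 y0 * (H x0 y0 + H y0 t - H t y0 - M x0 y0) ≤ 0 :=
          mul_nonpos_of_nonneg_of_nonpos (hPB x0 y0) (le_of_lt hneg)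
        have hP2 : PB N G y0 x0 * (H x0 y0 + H y0 t - H t y0 - M x0 y0) ≤ 0 :=
          mul_nonpos_of_nonneg_of_nonpos (hPB y0 x0) (le_of_lt hneg)
        have hQ1 : 0 ≤ PB N G x0 y0 * (H y0 y0 + (H y0 t - H t y0)) := by
          apply mul_nonneg (hPB x0 y0)
          rw [hH.1 y0]
          linarith [ht y0]
        have hQ2 : 0 ≤ PB N G y0 x0 * (H x0 x0 + H x0 t - H t x0) := by
          apply mul_nonneg (hPB y0 x0)
          rw [hH.1 x0]
          linarith [ht x0]
        linarith [hMeq, hSA, hSB, hEA, hEB, hP1, hP2, hQ1, hQ2]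
      · -- non-adjacent distinct minimizer : impossible
        exfalso
        have hMeq := hM.2.1 x0 y0 hxy hadj
        have hs1 : ∑ i ∈ G.neighborFinset x0, PB N G x0 i = PBsum N G x0 := rfl
        have hs2 : ∑ j ∈ G.neighborFinset y0, PB N G y0 j = PBsum N G y0 := rfl
        have hSA : ∑ i ∈ G.neighborFinset x0, PB N G x0 i * M i y0
            ≤ (∑ i ∈ G.neighborFinset x0, PB N G x0 i * (H i y0 + (H y0 t - H t y0)))
              - PBsum N G x0 * (H x0 y0 + H y0 t - H t y0 - M x0 y0) := by
          rw [← hs1, Finset.sum_mul, ← Finset.sum_sub_distrib]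
          apply Finset.sum_le_sum
          intro i _
          have hm := hmin i y0
          have := mul_le_mul_of_nonneg_left
            (show M i y0 ≤ H i y0 + (H y0 t - H t y0)
              - (H x0 y0 + H y0 t - H t y0 - M x0 y0) by linarith)
            (hPB x0 i)
          linarith
        have hSB : ∑ j ∈ G.neighborFinset y0, PB N G y0 j * M x0 j
            ≤ (∑ j ∈ G.neighborFinset y0, PB N G y0 j * (H x0 j + H j t - H t j))
              - PBsum N G y0 * (H x0 y0 + H y0 t - H t y0 - M x0 y0) := by
          rw [← hs2, Finset.sum_mul, ← Finset.sum_sub_distrib]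
          apply Finset.sum_le_sum
          intro j _
          have hm := hmin x0 j
          have := mul_le_mul_of_nonneg_left
            (show M x0 j ≤ H x0 j + H j t - H t j
              - (H x0 y0 + H y0 t - H t y0 - M x0 y0) by linarith)
            (hPB y0 j)
          linarith
        rw [key1 N G H hdeg hH hxy (H y0 t - H t y0)] at hSA
        rw [key2 N G H hdeg hH hN1 hxy t] at hSB
        linarith [hMeq, hSA, hSB]
  constructor
  · have := hmin x y
    linarith
  · by_cases hty : t = y
    · rw [hty, hH.1 y]
      linarith [hub x y, hHG1]
    · linarith [hub x y, hub y t, H_one_le N G H hdeg hH hty, hHG1]
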